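/- Let (𝔤, B) be a quadratic Lie algebra containing the Heisenberg Lie algebra 𝔥_m = V ⊕ Fℏ as an ideal. Then ℏ lies in the center of 𝔤, i.e. [ℏ, x] = 0 for all x ∈ 𝔤. -/

import Mathlib

/-- If a quadratic Lie algebra `𝔤` contains the Heisenberg Lie algebra
`𝔥_m = V ⊕ Fℏ` as an ideal, then `ℏ` is central in `𝔤`. -/
theorem hbar_central_of_heisenberg_ideal
    {F g : Type*} [Field F] [LieRing g] [LieAlgebra F g]
    (V : Submodule F g) (hbar : g) (ω : V →ₗ[F] V →ₗ[F] F)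
    (hbar_ne : hbar ≠ 0)
    (hbar_notin : hbar ∉ V)
    (hskew : ∀ u v : V, ω u v = - ω v u)
    (hω_nondeg : ∀ u : V, (∀ v : V, ω u v = 0) → u = 0)
    (hbrV : ∀ u v : V, ⁅(u : g), (v : g)⁆ = ω u v • hbar)
    (hcent : ∀ x ∈ V ⊔ Submodule.span F {hbar}, ⁅x, hbar⁆ = 0)
    (hideal : ∀ x : g, ∀ y ∈ V ⊔ Submodule.span F {hbar},
        ⁅x, y⁆ ∈ V ⊔ Submodule.span F {hbar})
    (B : LinearMap.BilinForm F g)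
    (hsymm : ∀ x y : g, B x y = B y x)
    (hnondeg : B.Nondegenerate)
    (hinv : ∀ x y z : g, B ⁅x, y⁆ z = B x ⁅y, z⁆) :
    ∀ x : g, ⁅hbar, x⁆ = 0 := by
  have hV0 : ∀ u : V, ⁅(u : g), hbar⁆ = 0 := fun u =>
    hcent u (Submodule.mem_sup_left u.2)
  have hV0' : ∀ u : V, ⁅hbar, (u : g)⁆ = 0 := by
    intro u; rw [← lie_skew, hV0 u, neg_zero]
  -- Step 1: every bracket with hbar is a scalar multiple of hbar.
  have key : ∀ x : g, ∃ c : F, ⁅x, hbar⁆ = c • hbar := by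
    intro x
    have hmem : ⁅x, hbar⁆ ∈ V ⊔ Submodule.span F {hbar} :=
      hideal x hbar (Submodule.mem_sup_right (Submodule.mem_span_singleton_self hbar))
    rw [Submodule.mem_sup] at hmem
    obtain ⟨v, hv, z, hz, hvz⟩ := hmem
    rw [Submodule.mem_span_singleton] at hz
    obtain ⟨c, rfl⟩ := hz
    refine ⟨c, ?_⟩
    have hzero : ∀ u : V, ω ⟨v, hv⟩ u = 0 := by
      intro u
      have h1 : ⁅⁅x, hbar⁆, (u : g)⁆ = 0 := by
        rw [lie_lie, hV0' u, lie_zero, zero_sub, neg_eq_zero, ← lie_skew,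
            hcent _ (hideal x u (Submodule.mem_sup_left u.2)), neg_zero]
      have h2 : ⁅⁅x, hbar⁆, (u : g)⁆ = ω ⟨v, hv⟩ u • hbar := by
        rw [← hvz, add_lie, smul_lie, hV0' u, smul_zero, add_zero, hbrV ⟨v, hv⟩ u]
      rw [h1] at h2
      rcases smul_eq_zero.mp h2.symm with h | h
      · exact h
      · exact absurd h hbar_ne
    have hv0 : v = 0 := by
      have := hω_nondeg _ hzero
      simpa using congrArg Subtype.val this
    rw [← hvz, hv0, zero_add]
  intro x
  obtain ⟨c, hc⟩ := key x
  by_cases hc0 : c = 0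
  · rw [← lie_skew, hc, hc0, zero_smul, neg_zero]
  exfalso
  have hβx : B hbar x = 0 := by
    have h := hinv hbar x x
    have hℏx : ⁅hbar, x⁆ = -(c • hbar) := by rw [← lie_skew, hc]
    rw [hℏx, lie_self, map_zero, map_neg, map_smul, LinearMap.neg_apply,
        LinearMap.smul_apply, neg_eq_zero, smul_eq_mul] at h
    have := mul_eq_zero.mp h
    tauto
  have hβ : ∀ y : g, B hbar y = 0 := by
    intro y
    obtain ⟨d, hd⟩ := key y
    have hℏy : ⁅hbar, y⁆ = -(d • hbar) := by rw [← lie_skew, hd]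
    have h := hinv x hbar y
    rw [hc, hℏy, map_smul, LinearMap.smul_apply, smul_eq_mul,
        map_neg, map_smul, smul_eq_mul] at h
    rw [hsymm x hbar, hβx] at h
    simp only [mul_zero, neg_zero] at h
    have := mul_eq_zero.mp h
    tauto
  exact hbar_ne (hnondeg.1 hbar hβ)
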